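/- Let C be a class of LTL formulas and ≈_C an equivalence on traces for C. For every HyperLTL sentence φ in the class 2^C and all sets of infinite traces T and T' that are (|V(φ)|, C)-equivalent, where V(φ) is the set of trace variables occurring in φ: T ⊨_H φ if and only if T' ⊨_H φ. -/

import Mathlib

/-- LTL formulas over an alphabet `A`. -/
inductive LTL (A : Type) : Type where
  | atom : A → LTL A
  | not  : LTL A → LTL A
  | or   : LTL A → LTL A → LTL A
  | next : LTL A → LTL A
  | untl : LTL A → LTL A → LTL A

/-- LTL satisfaction over an infinite trace. -/
def LTL.Sat {A : Type} : (ℕ → A → Bool) → LTL A → Prop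
  | τ, .atom a   => τ 0 a = true
  | τ, .not φ    => ¬ LTL.Sat τ φ
  | τ, .or φ ψ   => LTL.Sat τ φ ∨ LTL.Sat τ ψ
  | τ, .next φ   => LTL.Sat (fun n => τ (n + 1)) φ
  | τ, .untl φ ψ => ∃ j, LTL.Sat (fun n => τ (n + j)) ψ ∧
      ∀ j' < j, LTL.Sat (fun n => τ (n + j')) φ

/-- HyperLTL formulas over alphabet `X`, trace variables are natural numbers;
the quantifier-free part is an LTL formula over atoms `a_π = (a, π)`. -/
inductive HyperLTL (X : Type) : Type where
  | ex  : ℕ → HyperLTL X → HyperLTL X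
  | all : ℕ → HyperLTL X → HyperLTL X
  | qf  : LTL (X × ℕ) → HyperLTL X

/-- HyperLTL satisfaction of a quantifier-free formula by a partial trace
assignment over `T` at time `i`. -/
def HSatQF {X : Type} {T : Set (ℕ → X → Bool)} (Θ : ℕ → Option ↥T) : ℕ → LTL (X × ℕ) → Prop
  | i, .atom p   => ∃ τ : ↥T, Θ p.2 = some τ ∧ τ.1 i p.1 = true
  | i, .not φ    => ¬ HSatQF Θ i φ
  | i, .or φ ψ   => HSatQF Θ i φ ∨ HSatQF Θ i ψ
  | i, .next φ   => HSatQF Θ (i + 1) φ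
  | i, .untl φ ψ => ∃ j, i ≤ j ∧ HSatQF Θ j ψ ∧ ∀ j', i ≤ j' → j' < j → HSatQF Θ j' φ

/-- HyperLTL satisfaction: quantifiers range over `T`. -/
def HSat {X : Type} {T : Set (ℕ → X → Bool)} : (ℕ → Option ↥T) → ℕ → HyperLTL X → Prop
  | Θ, i, .ex π ψ  => ∃ τ : ↥T, HSat (Function.update Θ π (some τ)) i ψ
  | Θ, i, .all π ψ => ∀ τ : ↥T, HSat (Function.update Θ π (some τ)) i ψ
  | Θ, i, .qf φ    => HSatQF Θ i φ

/-- `T ⊨_H ψ` : satisfaction from the empty trace assignment at time 0. -/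
def HModels {X : Type} (T : Set (ℕ → X → Bool)) (ψ : HyperLTL X) : Prop :=
  HSat (T := T) (fun _ => none) 0 ψ

/-- Trace variables occurring in a quantifier-free HyperLTL formula. -/
def LTL.tvars {X : Type} : LTL (X × ℕ) → Finset ℕ
  | .atom p   => {p.2}
  | .not φ    => φ.tvars
  | .or φ ψ   => φ.tvars ∪ ψ.tvars
  | .next φ   => φ.tvars
  | .untl φ ψ => φ.tvars ∪ ψ.tvars

/-- Free trace variables of a HyperLTL formula. -/
def HyperLTL.free {X : Type} : HyperLTL X → Finset ℕ
  | .ex π ψ  => ψ.free.erase π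
  | .all π ψ => ψ.free.erase π
  | .qf φ    => φ.tvars

/-- A HyperLTL sentence has no free trace variables. -/
def HyperLTL.Closed {X : Type} (ψ : HyperLTL X) : Prop := ψ.free = ∅

/-- All trace variables occurring in a HyperLTL formula. -/
def HyperLTL.vars {X : Type} : HyperLTL X → Finset ℕ
  | .ex π ψ  => insert π ψ.vars
  | .all π ψ => insert π ψ.vars
  | .qf φ    => φ.tvars

/-- Flattening of a trace assignment: an infinite trace over the alphabet `X × ℕ`
(`false` on pairs `(a, π)` with `π` outside the domain of the assignment). -/
def flat {X : Type} {T : Set (ℕ → X → Bool)} (Θ : ℕ → Option ↥T) : ℕ → (X × ℕ) → Bool :=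
  fun i p => ((Θ p.2).map (fun τ => τ.1 i p.1)).getD false

/-- The domain of the assignment consists of exactly `k` trace variables. -/
def HasDomCard {X : Type} {T : Set (ℕ → X → Bool)} (Θ : ℕ → Option ↥T) (k : ℕ) : Prop :=
  ∃ s : Finset ℕ, (∀ π, (Θ π).isSome ↔ π ∈ s) ∧ s.card = k

/-- Composition `f ∘ Θ` of a bijection `f : T → T'` with an assignment over `T`. -/
def mapAssign {X : Type} {T T' : Set (ℕ → X → Bool)} (f : ↥T ≃ ↥T') (Θ : ℕ → Option ↥T) :
    ℕ → Option ↥T' := fun π => (Θ π).map f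

/-- `R` is an equivalence on traces for the class `C` of LTL formulas: an equivalence
relation such that `R`-related traces satisfy exactly the same formulas of `C`. -/
def EquivOnTracesFor {A : Type} (C : Set (LTL A))
    (R : (ℕ → A → Bool) → (ℕ → A → Bool) → Prop) : Prop :=
  Equivalence R ∧ ∀ φ ∈ C, ∀ τ τ', R τ τ' → (LTL.Sat τ φ ↔ LTL.Sat τ' φ)

/-- The bijection `f : T → T'` witnesses that `T` and `T'` are `(k, C)`-equivalent
(w.r.t. the trace equivalence `R`). -/
def KCEquivWith {X : Type}
    (R : (ℕ → (X × ℕ) → Bool) → (ℕ → (X × ℕ) → Bool) → Prop) (k : ℕ)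
    (T T' : Set (ℕ → X → Bool)) (f : ↥T ≃ ↥T') : Prop :=
  (∀ Θ : ℕ → Option ↥T, HasDomCard Θ k → R (flat Θ) (flat (mapAssign f Θ))) ∧
  (∀ Θ' : ℕ → Option ↥T', HasDomCard Θ' k → R (flat Θ') (flat (mapAssign f.symm Θ')))

/-- A HyperLTL formula `Q₁π₁…Qₙπₙ.φ` lies in the class `2^C` iff its quantifier-free
part `φ`, read as an LTL formula over the alphabet `X × ℕ`, belongs to `C`. -/
def HyperLTL.InClass {X : Type} (C : Set (LTL (X × ℕ))) : HyperLTL X → Prop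
  | .ex _ ψ  => ψ.InClass C
  | .all _ ψ => ψ.InClass C
  | .qf φ    => φ ∈ C

lemma sat_congr {A : Type} (φ : LTL A) {τ τ' : ℕ → A → Bool} (h : ∀ n, τ n = τ' n) :
    LTL.Sat τ φ ↔ LTL.Sat τ' φ := by
  rw [funext h]

lemma hsatqf_iff_sat {X : Type} {T : Set (ℕ → X → Bool)} (φ : LTL (X × ℕ))
    (Θ : ℕ → Option ↥T) (h : ∀ p ∈ φ.tvars, (Θ p).isSome) :
    ∀ i, HSatQF Θ i φ ↔ LTL.Sat (fun n => flat Θ (n + i)) φ := by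
  induction φ with
  | atom p =>
    intro i
    have hp : (Θ p.2).isSome := h p.2 (by simp [LTL.tvars])
    obtain ⟨τ, hτ⟩ := Option.isSome_iff_exists.mp hp
    simp [HSatQF, LTL.Sat, flat, hτ]
  | not φ ih =>
    intro i
    simpa [HSatQF, LTL.Sat] using not_congr (ih h i)
  | or φ ψ ihφ ihψ =>
    intro i
    have h1 : ∀ p ∈ φ.tvars, (Θ p).isSome := fun p hp => h p (by simp [LTL.tvars, hp])
    have h2 : ∀ p ∈ ψ.tvars, (Θ p).isSome := fun p hp => h p (by simp [LTL.tvars, hp])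
    simpa [HSatQF, LTL.Sat] using or_congr (ihφ h1 i) (ihψ h2 i)
  | next φ ih =>
    intro i
    have := ih h (i + 1)
    simp only [HSatQF, LTL.Sat]
    rw [this]
    exact sat_congr φ (fun n => by rw [show n + (i + 1) = n + 1 + i by omega])
  | untl φ ψ ihφ ihψ =>
    intro i
    have h1 : ∀ p ∈ φ.tvars, (Θ p).isSome := fun p hp => h p (by simp [LTL.tvars, hp])
    have h2 : ∀ p ∈ ψ.tvars, (Θ p).isSome := fun p hp => h p (by simp [LTL.tvars, hp])
    constructor
    · rintro ⟨j, hij, hψ, hφ⟩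
      refine ⟨j - i, ?_, ?_⟩
      · have := (ihψ h2 j).mp hψ
        exact (sat_congr ψ (fun n => by
          show flat Θ (n + (j - i) + i) = flat Θ (n + j); rw [show n + (j - i) + i = n + j from by omega])).mpr this
      · intro j' hj'
        have hjj : i ≤ j' + i := by omega
        have hlt : j' + i < j := by omega
        have := (ihφ h1 (j' + i)).mp (hφ (j' + i) hjj hlt)
        exact (sat_congr φ (fun n => by
          show flat Θ (n + j' + i) = flat Θ (n + (j' + i)); rw [show n + j' + i = n + (j' + i) from by omega])).mpr this
    · rintro ⟨j, hψ, hφ⟩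
      refine ⟨i + j, by omega, ?_, ?_⟩
      · refine (ihψ h2 (i + j)).mpr ?_
        exact (sat_congr ψ (fun n => by
          show flat Θ (n + j + i) = flat Θ (n + (i + j)); rw [show n + j + i = n + (i + j) from by omega])).mp hψ
      · intro j' hij' hlt
        refine (ihφ h1 j').mpr ?_
        have := hφ (j' - i) (by omega)
        exact (sat_congr φ (fun n => by
          show flat Θ (n + (j' - i) + i) = flat Θ (n + j'); rw [show n + (j' - i) + i = n + j' from by omega])).mp this

lemma update_mapAssign {X : Type} {T T' : Set (ℕ → X → Bool)} (f : ↥T ≃ ↥T')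
    (Θ : ℕ → Option ↥T) (π : ℕ) (τ : ↥T) :
    Function.update (mapAssign f Θ) π (some (f τ)) =
      mapAssign f (Function.update Θ π (some τ)) := by
  funext π'
  by_cases hπ : π' = π <;> simp [Function.update, hπ, mapAssign]

lemma hsat_mono {X : Type} {T T' : Set (ℕ → X → Bool)} (C : Set (LTL (X × ℕ)))
    (R : (ℕ → (X × ℕ) → Bool) → (ℕ → (X × ℕ) → Bool) → Prop)
    (hR : EquivOnTracesFor C R) (k : ℕ) (f : ↥T ≃ ↥T')
    (hf : ∀ Θ : ℕ → Option ↥T, HasDomCard Θ k → R (flat Θ) (flat (mapAssign f Θ))) :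
    ∀ (ψ : HyperLTL X) (Θ : ℕ → Option ↥T) (s : Finset ℕ),
      (∀ π, (Θ π).isSome ↔ π ∈ s) → ψ.free ⊆ s → (s ∪ ψ.vars).card = k →
      ψ.InClass C → HSat Θ 0 ψ → HSat (mapAssign f Θ) 0 ψ := by
  intro ψ
  induction ψ with
  | ex π ψ ih =>
    intro Θ s hdom hfree hcard hcl hsat
    obtain ⟨τ, hτ⟩ := hsat
    refine ⟨f τ, ?_⟩
    rw [update_mapAssign]
    refine ih (Function.update Θ π (some τ)) (insert π s) ?_ ?_ ?_ hcl hτ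
    · intro π'
      by_cases hπ : π' = π <;> simp [Function.update, hπ, hdom]
    · intro x hx
      by_cases hxπ : x = π
      · simp [hxπ]
      · have : x ∈ ψ.free.erase π := Finset.mem_erase.mpr ⟨hxπ, hx⟩
        exact Finset.mem_insert_of_mem (hfree this)
    · rw [show insert π s ∪ ψ.vars = s ∪ (HyperLTL.ex π ψ).vars by
        simp only [HyperLTL.vars, Finset.insert_union, Finset.union_insert]]
      exact hcard
  | all π ψ ih =>
    intro Θ s hdom hfree hcard hcl hsat
    intro τ'
    have hτ := hsat (f.symm τ')
    have := ih (Function.update Θ π (some (f.symm τ'))) (insert π s) ?_ ?_ ?_ hcl hτ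
    · have heq := update_mapAssign f Θ π (f.symm τ')
      rw [f.apply_symm_apply] at heq
      rwa [heq]
    · intro π'
      by_cases hπ : π' = π <;> simp [Function.update, hπ, hdom]
    · intro x hx
      by_cases hxπ : x = π
      · simp [hxπ]
      · have : x ∈ ψ.free.erase π := Finset.mem_erase.mpr ⟨hxπ, hx⟩
        exact Finset.mem_insert_of_mem (hfree this)
    · rw [show insert π s ∪ ψ.vars = s ∪ (HyperLTL.all π ψ).vars by
        simp only [HyperLTL.vars, Finset.insert_union, Finset.union_insert]]
      exact hcard
  | qf φ =>
    intro Θ s hdom hfree hcard hcl hsat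
    have htv : ∀ p ∈ φ.tvars, (Θ p).isSome := fun p hp => (hdom p).mpr (hfree hp)
    have htv' : ∀ p ∈ φ.tvars, ((mapAssign f Θ) p).isSome := by
      intro p hp
      simpa [mapAssign, Option.isSome_map] using htv p hp
    have hscard : s.card = k := by
      rwa [show s ∪ (HyperLTL.qf φ).vars = s from Finset.union_eq_left.mpr hfree] at hcard
    have hRst : R (flat Θ) (flat (mapAssign f Θ)) := hf Θ ⟨s, hdom, hscard⟩
    have h1 := (hsatqf_iff_sat φ Θ htv 0).mp hsat
    have h2 := (hR.2 φ hcl (flat Θ) (flat (mapAssign f Θ)) hRst).mp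
      ((sat_congr φ (fun n => rfl)).mp h1)
    exact (hsatqf_iff_sat φ (mapAssign f Θ) htv' 0).mpr
      ((sat_congr φ (fun n => rfl)).mp h2)

/-- Theorem. Let `C` be a class of LTL formulas and `R` an equivalence
on traces for `C`. For every HyperLTL sentence `φ ∈ 2^C` and all sets of infinite traces
`T` and `T'` that are `(|V(φ)|, C)`-equivalent: `T ⊨_H φ` iff `T' ⊨_H φ`. -/
theorem kcEquiv_preserves_hyperLTL_sentences
    {X : Type} [Finite X] (C : Set (LTL (X × ℕ)))
    (R : (ℕ → (X × ℕ) → Bool) → (ℕ → (X × ℕ) → Bool) → Prop)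
    (hR : EquivOnTracesFor C R)
    (φ : HyperLTL X) (hclosed : φ.Closed) (hφ : φ.InClass C)
    (T T' : Set (ℕ → X → Bool))
    (hTT' : ∃ f : ↥T ≃ ↥T', KCEquivWith R φ.vars.card T T' f) :
    HModels T φ ↔ HModels T' φ := by
  obtain ⟨f, hf1, hf2⟩ := hTT'
  have hfree : φ.free ⊆ (∅ : Finset ℕ) := by rw [hclosed]
  have hnone : mapAssign f (fun _ => none : ℕ → Option ↥T) = (fun _ => none) := by
    funext π; simp [mapAssign]
  have hnone' : mapAssign f.symm (fun _ => none : ℕ → Option ↥T') = (fun _ => none) := by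
    funext π; simp [mapAssign]
  constructor
  · intro h
    have := hsat_mono C R hR φ.vars.card f hf1 φ (fun _ => none) ∅
      (by simp) hfree (by simp) hφ h
    rwa [hnone] at this
  · intro h
    have := hsat_mono C R hR φ.vars.card f.symm hf2 φ (fun _ => none) ∅
      (by simp) hfree (by simp) hφ h
    rwa [hnone'] at this
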